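/- arXiv:2101.05394 — 3 statements merged into one kernel-verified Lean document; each statement's English description precedes it below -/
import Mathlib

section
/- Let d be a positive integer, δ ∈ (0,1) and τ > 0. Define the Negative Binomial function N_{δ,τ}(θ) = ((1-δ)/(1-δ cos θ))^τ for θ ∈ [0,π]. Then the kernel (x,y) ↦ N_{δ,τ}(arccos⟨x,y⟩) is positive semidefinite on the unit sphere of ℝ^{d+1}; moreover, for every θ ∈ [0,π], N_{δ,τ}(θ) = Σ_{n=0}^∞ b_n(δ,τ) (cos θ)^n, where b_n(δ,τ) = ((τ)_n / n!) δ^n (1-δ)^τ ≥ 0 and Σ_{n=0}^∞ b_n(δ,τ) = 1. -/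
open Real MeasureTheory

/-- Pochhammer symbol (rising factorial) `(x)_n = x(x+1)⋯(x+n-1)`. -/
noncomputable def poch (x : ℝ) (n : ℕ) : ℝ := Polynomial.eval x (ascPochhammer ℝ n)

/-- The Negative Binomial family `N_{δ,τ}(θ) = ((1-δ)/(1-δ cos θ))^τ`. -/
noncomputable def negBinom (δ τ θ : ℝ) : ℝ := ((1 - δ) / (1 - δ * Real.cos θ)) ^ τ

section Aux
open Filter
open scoped NNReal ENNReal
lemma poch_zero (τ : ℝ) : poch τ 0 = 1 := by simp [poch]

lemma poch_succ (τ : ℝ) (n : ℕ) : poch τ (n+1) = poch τ n * (τ + n) := by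
  simp [poch, ascPochhammer_succ_right]

lemma poch_pos {τ : ℝ} (hτ : 0 < τ) (n : ℕ) : 0 < poch τ n := by
  induction n with
  | zero => simp [poch_zero]
  | succ n ih => rw [poch_succ]; positivity

lemma ofScalars_derivSeries_apply (a : ℕ → ℝ) (n : ℕ) (y z : ℝ) :
    (FormalMultilinearSeries.ofScalars ℝ a).derivSeries n (fun _ ↦ y) z
      = ((n+1 : ℝ) * a (n+1) * y ^ n) * z := by
  simp only [FormalMultilinearSeries.derivSeries,
    ContinuousLinearMap.compFormalMultilinearSeries_apply,
    FormalMultilinearSeries.changeOriginSeries,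
    ContinuousLinearMap.compContinuousMultilinearMap_coe, ContinuousLinearEquiv.coe_coe,
    LinearIsometryEquiv.coe_coe, Function.comp_apply, ContinuousMultilinearMap.sum_apply, map_sum,
    ContinuousLinearMap.coe_sum', Finset.sum_apply, continuousMultilinearCurryFin1_apply,
    Matrix.zero_empty]
  have hterm : ∀ s : {s : Finset (Fin (1+n)) // s.card = n},
      ((((FormalMultilinearSeries.ofScalars ℝ a).changeOriginSeriesTerm 1 n s.1 s.2)
        fun _ => y) (Fin.snoc ![] z)) = a (1+n) * (y ^ n * z) := by
    intro s
    rw [Fin.snoc_zero, FormalMultilinearSeries.changeOriginSeriesTerm_apply]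
    rw [FormalMultilinearSeries.ofScalars]
    simp only [ContinuousMultilinearMap.smul_apply, ContinuousMultilinearMap.mkPiAlgebraFin_apply,
      List.prod_ofFn]
    rw [Finset.prod_piecewise]
    simp only [Finset.univ_inter, Finset.prod_const, s.2, smul_eq_mul]
    congr 2
    rw [Finset.card_sdiff_of_subset (Finset.subset_univ _), Finset.card_univ, Fintype.card_fin, s.2,
      show 1 + n - n = 1 from by omega, pow_one]
  rw [Finset.sum_congr rfl fun s _ => hterm s, Finset.sum_const]
  rw [Finset.card_univ, Fintype.card_subtype, ← Finset.powerset_univ,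
    ← Finset.powersetCard_eq_filter, Finset.card_powersetCard, Finset.card_univ, Fintype.card_fin,
    nsmul_eq_mul, show (1+n).choose n = n+1 from add_comm 1 n ▸ Nat.choose_succ_self_right n,
    add_comm 1 n]
  push_cast
  ring

lemma binomial_hasSum {τ : ℝ} (hτ : 0 < τ) {x : ℝ} (hx : |x| < 1) :
    HasSum (fun n : ℕ => poch τ n / n.factorial * x ^ n) (((1 - x) ^ τ)⁻¹) := by
  set a : ℕ → ℝ := fun n => poch τ n / n.factorial with ha_def
  have ha_pos : ∀ n, 0 < a n := fun n => by
    have := poch_pos hτ n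
    have := Nat.factorial_pos n
    positivity
  have ha_succ : ∀ n : ℕ, a (n+1) = a n * ((τ + n)/(n+1)) := by
    intro n
    have hn : (n:ℝ) + 1 ≠ 0 := by positivity
    have hfac : (Nat.factorial (n+1) : ℝ) = (n+1) * n.factorial := by
      push_cast [Nat.factorial_succ]; ring
    simp only [ha_def, poch_succ, hfac]
    have hfne : (n.factorial : ℝ) ≠ 0 := Nat.cast_ne_zero.mpr n.factorial_ne_zero
    rw [div_mul_div_comm, mul_comm ((n:ℝ)+1) (n.factorial:ℝ)]
  set p := FormalMultilinearSeries.ofScalars ℝ a with hp_def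
  have htend : Tendsto (fun n : ℕ => ‖a (n+1)‖ / ‖a n‖) atTop (nhds ((1:ℝ≥0):ℝ)) := by
    have heq : ∀ n : ℕ, ‖a (n+1)‖ / ‖a n‖ = 1 + (τ - 1) * (1/((n:ℝ)+1)) := by
      intro n
      have hn : (n:ℝ) + 1 ≠ 0 := by positivity
      rw [Real.norm_eq_abs, Real.norm_eq_abs, abs_of_pos (ha_pos _), abs_of_pos (ha_pos _),
        ha_succ n, mul_div_cancel_left₀ _ (ne_of_gt (ha_pos n))]
      have hn' : ((n:ℝ)+1) ≠ 0 := by positivity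
      field_simp
      ring
    rw [show ((1:ℝ≥0):ℝ) = 1 + (τ-1)*0 by simp]
    exact (tendsto_const_nhds.add (tendsto_const_nhds.mul
      tendsto_one_div_add_atTop_nhds_zero_nat)).congr fun n => (heq n).symm
  have hrad : 1 ≤ p.radius := by
    have := FormalMultilinearSeries.inv_le_ofScalars_radius_of_tendsto ℝ a one_ne_zero htend
    simpa using this
  set f := p.sum with hf_def
  have hball : ∀ {y : ℝ}, |y| < 1 → y ∈ Metric.eball (0:ℝ) 1 := by
    intro y hy
    rw [mem_emetric_ball_zero_iff]
    have h1 : ‖y‖₊ < 1 := by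
      rw [← NNReal.coe_lt_coe, coe_nnnorm, Real.norm_eq_abs]
      simpa using hy
    rw [enorm_eq_nnnorm]
    exact_mod_cast h1
  have hp_ball : HasFPowerSeriesOnBall f p 0 1 :=
    (p.hasFPowerSeriesOnBall (lt_of_lt_of_le one_pos hrad)).mono one_pos hrad
  have hf_sum : ∀ {y : ℝ}, |y| < 1 → HasSum (fun n => a n * y ^ n) (f y) := by
    intro y hy
    have := hp_ball.hasSum (hball hy)
    simp only [hp_def, FormalMultilinearSeries.ofScalars_apply_eq, smul_eq_mul, zero_add] at this
    exact this
  have hderiv_sum : ∀ {y : ℝ}, |y| < 1 →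
      HasSum (fun n : ℕ => ((n:ℝ)+1) * a (n+1) * y ^ n) (deriv f y) := by
    intro y hy
    have h1 := (hp_ball.fderiv).hasSum (hball hy)
    have h2 := h1.mapL (ContinuousLinearMap.apply ℝ ℝ (1:ℝ))
    simp only [ContinuousLinearMap.apply_apply, hp_def, ofScalars_derivSeries_apply, mul_one,
      zero_add] at h2
    rwa [fderiv_apply_one_eq_deriv] at h2
  have hdiff : ∀ {y : ℝ}, |y| < 1 → HasDerivAt f (deriv f y) y := by
    intro y hy
    exact ((hp_ball.analyticAt_of_mem (hball hy)).differentiableAt).hasDerivAt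
  have hODE : ∀ {y : ℝ}, |y| < 1 → (1 - y) * deriv f y = τ * f y := by
    intro y hy
    have hS2 := hderiv_sum hy
    have hS3 : HasSum (fun m : ℕ => (m:ℝ) * a m * y ^ m) (y * deriv f y) := by
      have h := hS2.mul_left y
      have h' : (fun n : ℕ => ((fun m : ℕ => (m:ℝ) * a m * y ^ m) (n+1)))
          = fun n : ℕ => y * (((n:ℝ)+1) * a (n+1) * y ^ n) := by
        funext n; push_cast; ring
      rw [← h'] at h
      have h2 := (hasSum_nat_add_iff (f := fun m : ℕ => (m:ℝ) * a m * y ^ m) 1).mp h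
      simpa using h2
    have hS4 := (hf_sum hy).mul_left τ
    have hS5 := hS3.add hS4
    have hfun : (fun m : ℕ => (m:ℝ) * a m * y ^ m + τ * (a m * y ^ m))
        = fun m : ℕ => ((m:ℝ)+1) * a (m+1) * y ^ m := by
      funext m
      have hm : (m:ℝ) + 1 ≠ 0 := by positivity
      rw [ha_succ m]
      field_simp
      ring
    rw [hfun] at hS5
    have := hS2.unique hS5
    linarith
  set g : ℝ → ℝ := fun y => f y * (1 - y) ^ τ with hg_def
  have hg_deriv : ∀ y ∈ Set.Ioo (-1:ℝ) 1, HasDerivAt g 0 y := by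
    intro y hy
    have hy' : |y| < 1 := abs_lt.mpr ⟨hy.1, hy.2⟩
    have h0 : (0:ℝ) < 1 - y := by linarith [hy.2]
    have h1 : HasDerivAt (fun t : ℝ => (1:ℝ) - t) (-1) y := by
      simpa using (hasDerivAt_id y).const_sub 1
    have h2 : HasDerivAt (fun t : ℝ => (1 - t) ^ τ) (τ * (1-y) ^ (τ-1) * (-1)) y :=
      (Real.hasDerivAt_rpow_const (p := τ) (Or.inl (ne_of_gt h0))).comp y h1
    have h3 := (hdiff hy').mul h2
    have hval : deriv f y * (1-y) ^ τ + f y * (τ * (1-y) ^ (τ-1) * (-1)) = 0 := by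
      have hpow : (1-y) ^ τ = (1-y) ^ (τ-1) * (1-y) := by
        rw [← Real.rpow_add_one (ne_of_gt h0), sub_add_cancel]
      have hode := hODE hy'
      rw [hpow]
      linear_combination ((1-y) ^ (τ-1)) * hode
    rw [hval] at h3
    exact h3
  have hconst : ∀ y ∈ Set.Ioo (-1:ℝ) 1, g y = g 0 := by
    intro y hy
    have h0mem : (0:ℝ) ∈ Set.Ioo (-1:ℝ) 1 := by norm_num
    refine (convex_Ioo (-1:ℝ) 1).is_const_of_fderivWithin_eq_zero
      (fun z hz => (hg_deriv z hz).differentiableAt.differentiableWithinAt) ?_ hy h0mem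
    intro z hz
    rw [fderivWithin_of_isOpen isOpen_Ioo hz, (hg_deriv z hz).hasFDerivAt.fderiv]
    exact ContinuousLinearMap.ext fun t => by simp
  have hf0 : f 0 = 1 := by
    have h1 := hf_sum (show |(0:ℝ)| < 1 by norm_num)
    have h2 : HasSum (fun n : ℕ => a n * (0:ℝ) ^ n) (a 0) := by
      have := hasSum_single (f := fun n : ℕ => a n * (0:ℝ) ^ n) 0
        (fun n hn => by simp [zero_pow hn])
      simpa using this
    have := h1.unique h2
    rw [this]
    simp [ha_def, poch_zero]
  have hg0 : g 0 = 1 := by simp [hg_def, hf0]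
  have hx' : x ∈ Set.Ioo (-1:ℝ) 1 := ⟨(abs_lt.mp hx).1, (abs_lt.mp hx).2⟩
  have hfx : f x * (1 - x) ^ τ = 1 := by
    have := hconst x hx'
    rw [hg0] at this
    exact this
  have hfx' : f x = ((1 - x) ^ τ)⁻¹ := eq_inv_of_mul_eq_one_left hfx
  exact hfx' ▸ hf_sum hx

end Aux

/-- The Negative Binomial kernel is positive semidefinite on the unit sphere of `ℝ^{d+1}`,
its coefficients `b_n(δ,τ) = ((τ)_n/n!) δ^n (1-δ)^τ` are nonnegative and sum to one, and
`N_{δ,τ}(θ) = Σ_n b_n(δ,τ) (cos θ)^n` for every `θ ∈ [0,π]`. -/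
theorem negBinom_posSemidef_and_expansion (d : ℕ) (hd : 0 < d)
    (δ τ : ℝ) (hδ : δ ∈ Set.Ioo (0:ℝ) 1) (hτ : 0 < τ) :
    (∀ m : ℕ, 0 < m → ∀ x : Fin m → EuclideanSpace ℝ (Fin (d + 1)),
      (∀ i, ‖x i‖ = 1) → ∀ c : Fin m → ℝ,
        0 ≤ ∑ i, ∑ j, c i * c j * negBinom δ τ (Real.arccos (inner ℝ (x i) (x j)))) ∧
    (∀ n : ℕ, 0 ≤ poch τ n / n.factorial * δ ^ n * (1 - δ) ^ τ) ∧
    HasSum (fun n : ℕ => poch τ n / n.factorial * δ ^ n * (1 - δ) ^ τ) 1 ∧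
    ∀ θ ∈ Set.Icc (0:ℝ) Real.pi,
      HasSum (fun n : ℕ => poch τ n / n.factorial * δ ^ n * (1 - δ) ^ τ * Real.cos θ ^ n)
        (negBinom δ τ θ) := by
  obtain ⟨hδ0, hδ1⟩ := hδ
  have hb_nonneg : ∀ n : ℕ, 0 ≤ poch τ n / n.factorial * δ ^ n * (1 - δ) ^ τ := by
    intro n
    have h1 := poch_pos hτ n
    have h2 : (0:ℝ) < n.factorial := by exact_mod_cast n.factorial_pos
    have h3 : (0:ℝ) < 1 - δ := by linarith
    positivity
  have hexp : ∀ θ ∈ Set.Icc (0:ℝ) Real.pi,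
      HasSum (fun n : ℕ => poch τ n / n.factorial * δ ^ n * (1 - δ) ^ τ * Real.cos θ ^ n)
        (negBinom δ τ θ) := by
    intro θ _
    have hcos : |Real.cos θ| ≤ 1 := Real.abs_cos_le_one θ
    have hx : |δ * Real.cos θ| < 1 := by
      rw [abs_mul, abs_of_pos hδ0]
      nlinarith
    have h1 := (binomial_hasSum hτ hx).mul_right ((1 - δ) ^ τ)
    have h2 : (0:ℝ) < 1 - δ * Real.cos θ := by
      have := (abs_lt.mp hx).2
      linarith
    have hval : ((1 - δ * Real.cos θ) ^ τ)⁻¹ * (1 - δ) ^ τ = negBinom δ τ θ := by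
      rw [negBinom, Real.div_rpow (by linarith) (le_of_lt h2), div_eq_mul_inv, mul_comm]
    have hfun : (fun n : ℕ => poch τ n / n.factorial * (δ * Real.cos θ) ^ n * ((1 - δ) ^ τ))
        = fun n : ℕ => poch τ n / n.factorial * δ ^ n * (1 - δ) ^ τ * Real.cos θ ^ n := by
      funext n
      rw [mul_pow]
      ring
    rw [hfun, hval] at h1
    exact h1
  have hsum1 : HasSum (fun n : ℕ => poch τ n / n.factorial * δ ^ n * (1 - δ) ^ τ) 1 := by
    have h := hexp 0 ⟨le_refl 0, Real.pi_pos.le⟩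
    have hfun : (fun n : ℕ => poch τ n / n.factorial * δ ^ n * (1 - δ) ^ τ * Real.cos 0 ^ n)
        = fun n : ℕ => poch τ n / n.factorial * δ ^ n * (1 - δ) ^ τ := by
      funext n; simp
    have hval : negBinom δ τ 0 = 1 := by
      rw [negBinom, Real.cos_zero, mul_one, div_self (by linarith : (1:ℝ) - δ ≠ 0), Real.one_rpow]
    rw [hfun, hval] at h
    exact h
  refine ⟨?_, hb_nonneg, hsum1, hexp⟩
  intro m hm x hx c
  set T : Fin m → Fin m → ℝ := fun i j => inner ℝ (x i) (x j) with hT_def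
  have hT1 : ∀ i j, |T i j| ≤ 1 := by
    intro i j
    have := abs_real_inner_le_norm (x i) (x j)
    simpa [hT_def, hx i, hx j] using this
  have hkey : ∀ n : ℕ, 0 ≤ ∑ i, ∑ j, c i * c j * T i j ^ n := by
    intro n
    have hTsum : ∀ i j, T i j ^ n
        = ∑ p : Fin n → Fin (d+1), (∏ t, x i (p t)) * (∏ t, x j (p t)) := by
      intro i j
      have hinner : T i j = ∑ k, x i k * x j k := by
        simp [hT_def, PiLp.inner_apply, RCLike.inner_apply, conj_trivial, mul_comm]
      rw [hinner, Fintype.sum_pow]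
      exact Finset.sum_congr rfl fun p _ => Finset.prod_mul_distrib
    have hcalc : ∑ i, ∑ j, c i * c j * T i j ^ n
        = ∑ p : Fin n → Fin (d+1), (∑ i, c i * ∏ t, x i (p t)) ^ 2 := by
      calc ∑ i, ∑ j, c i * c j * T i j ^ n
          = ∑ i, ∑ j, ∑ p : Fin n → Fin (d+1),
              (c i * ∏ t, x i (p t)) * (c j * ∏ t, x j (p t)) := by
            refine Finset.sum_congr rfl fun i _ => Finset.sum_congr rfl fun j _ => ?_
            rw [hTsum i j, Finset.mul_sum]
            exact Finset.sum_congr rfl fun p _ => by ring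
        _ = ∑ i, ∑ p : Fin n → Fin (d+1), ∑ j,
              (c i * ∏ t, x i (p t)) * (c j * ∏ t, x j (p t)) :=
            Finset.sum_congr rfl fun i _ => Finset.sum_comm
        _ = ∑ p : Fin n → Fin (d+1), ∑ i, ∑ j,
              (c i * ∏ t, x i (p t)) * (c j * ∏ t, x j (p t)) := Finset.sum_comm
        _ = ∑ p : Fin n → Fin (d+1), (∑ i, c i * ∏ t, x i (p t)) ^ 2 := by
            refine Finset.sum_congr rfl fun p _ => ?_
            rw [sq, Finset.sum_mul_sum]
    rw [hcalc]
    exact Finset.sum_nonneg fun p _ => sq_nonneg _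
  have hcosT : ∀ i j, Real.cos (Real.arccos (T i j)) = T i j := by
    intro i j
    exact Real.cos_arccos (abs_le.mp (hT1 i j)).1 (abs_le.mp (hT1 i j)).2
  have hij : ∀ i j, HasSum
      (fun n : ℕ => poch τ n / n.factorial * δ ^ n * (1 - δ) ^ τ * T i j ^ n)
      (negBinom δ τ (Real.arccos (T i j))) := by
    intro i j
    have h := hexp (Real.arccos (T i j)) ⟨Real.arccos_nonneg _, Real.arccos_le_pi _⟩
    rwa [hcosT i j] at h
  have hbig : HasSum
      (fun n : ℕ => ∑ i, ∑ j, c i * c j *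
        (poch τ n / n.factorial * δ ^ n * (1 - δ) ^ τ * T i j ^ n))
      (∑ i, ∑ j, c i * c j * negBinom δ τ (Real.arccos (T i j))) := by
    refine hasSum_sum fun i _ => hasSum_sum fun j _ => ?_
    exact (hij i j).mul_left _
  refine hbig.nonneg ?_
  intro n
  have heq : ∑ i, ∑ j, c i * c j *
        (poch τ n / n.factorial * δ ^ n * (1 - δ) ^ τ * T i j ^ n)
      = (poch τ n / n.factorial * δ ^ n * (1 - δ) ^ τ) * ∑ i, ∑ j, c i * c j * T i j ^ n := by
    simp_rw [Finset.mul_sum]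
    exact Finset.sum_congr rfl fun i _ => Finset.sum_congr rfl fun j _ => by ring
  rw [heq]
  exact mul_nonneg (hb_nonneg n) (hkey n)
end

section
/- Let τ > 0 and let (α_n)_{n≥1} and (ν_n)_{n≥1} be positive increasing sequences with α_n → ∞ such that ν_n/α_n converges to a finite positive constant κ as n → ∞. Then for every θ ∈ [0,π], F_{τ,α_n,ν_n}(θ) converges, as n → ∞, to N_{1/(1+κ),τ}(θ) = ((1 - 1/(1+κ)) / (1 - (1/(1+κ)) cos θ))^τ = (κ/(1+κ-cos θ))^τ. -/
open Real MeasureTheory Filter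

/-- Euler Beta function `B(a,b) = Γ(a)Γ(b)/Γ(a+b)`. -/
noncomputable def betaFn (a b : ℝ) : ℝ := Real.Gamma a * Real.Gamma b / Real.Gamma (a + b)

/-- The `F`-family correlation function. -/
noncomputable def Ffam (τ α ν θ : ℝ) : ℝ :=
  (1 / betaFn α ν) * ∫ δ in Set.Ioo (0:ℝ) 1,
    ((1 - δ) / (1 - δ * Real.cos θ)) ^ τ * δ ^ (α - 1) * (1 - δ) ^ (ν - 1)

lemma betaFn_pos {a b : ℝ} (ha : 0 < a) (hb : 0 < b) : 0 < betaFn a b :=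
  div_pos (mul_pos (Real.Gamma_pos_of_pos ha) (Real.Gamma_pos_of_pos hb))
    (Real.Gamma_pos_of_pos (by linarith))

lemma complex_eq_real_integrand {a b : ℝ} {x : ℝ} (h0 : 0 ≤ x) (h1 : x ≤ 1) :
    (x:ℂ) ^ ((a:ℂ) - 1) * ((1:ℂ) - (x:ℂ)) ^ ((b:ℂ) - 1)
      = ((x ^ (a-1) * (1-x) ^ (b-1) : ℝ) : ℂ) := by
  rw [show ((a:ℂ) - 1) = ((a - 1 : ℝ) : ℂ) by push_cast; ring,
    show ((b:ℂ) - 1) = ((b - 1 : ℝ) : ℂ) by push_cast; ring,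
    show ((1:ℂ) - (x:ℂ)) = ((1 - x : ℝ) : ℂ) by push_cast; ring,
    ← Complex.ofReal_cpow h0, ← Complex.ofReal_cpow (by linarith)]
  push_cast
  ring

lemma integral_w {a b : ℝ} (ha : 0 < a) (hb : 0 < b) :
    ∫ x in Set.Ioo (0:ℝ) 1, x ^ (a-1) * (1-x) ^ (b-1) = betaFn a b := by
  have key : Complex.betaIntegral a b = ((betaFn a b : ℝ) : ℂ) := by
    have h := Complex.Gamma_mul_Gamma_eq_betaIntegral
      (s := (a:ℂ)) (t := (b:ℂ)) (by simpa using ha) (by simpa using hb)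
    rw [show ((a:ℂ) + (b:ℂ)) = ((a + b : ℝ) : ℂ) by push_cast; ring,
      Complex.Gamma_ofReal, Complex.Gamma_ofReal, Complex.Gamma_ofReal] at h
    have hG : ((Real.Gamma (a+b) : ℝ) : ℂ) ≠ 0 := by
      exact_mod_cast (Real.Gamma_pos_of_pos (by linarith : (0:ℝ) < a + b)).ne'
    rw [betaFn]
    push_cast
    rw [eq_div_iff hG, mul_comm (Complex.betaIntegral _ _), ← h]
  have h2 : Complex.betaIntegral a b
      = ((∫ x in (0:ℝ)..1, x ^ (a-1) * (1-x) ^ (b-1) : ℝ) : ℂ) := by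
    rw [Complex.betaIntegral, ← intervalIntegral.integral_ofReal]
    refine intervalIntegral.integral_congr fun x hx => ?_
    rw [Set.uIcc_of_le (by norm_num : (0:ℝ) ≤ 1)] at hx
    exact complex_eq_real_integrand hx.1 hx.2
  have h3 : (∫ x in (0:ℝ)..1, x ^ (a-1) * (1-x) ^ (b-1) : ℝ) = betaFn a b := by
    have := h2.symm.trans key
    exact_mod_cast this
  rw [← h3, intervalIntegral.integral_of_le (by norm_num : (0:ℝ) ≤ 1),
    ← MeasureTheory.integral_Ioc_eq_integral_Ioo]

lemma integrable_w {a b : ℝ} (ha : 0 < a) (hb : 0 < b) :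
    IntegrableOn (fun x => x ^ (a-1) * (1-x) ^ (b-1)) (Set.Ioo (0:ℝ) 1) := by
  have h := Complex.betaIntegral_convergent (u := (a:ℂ)) (v := (b:ℂ))
    (by simpa using ha) (by simpa using hb)
  rw [intervalIntegrable_iff, Set.uIoc_of_le (by norm_num : (0:ℝ) ≤ 1)] at h
  have h2 : IntegrableOn
      (fun x : ℝ => ((x ^ (a-1) * (1-x) ^ (b-1) : ℝ) : ℂ)) (Set.Ioc (0:ℝ) 1) := by
    refine h.congr_fun (fun x hx => ?_) measurableSet_Ioc
    exact complex_eq_real_integrand hx.1.le hx.2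
  have h3 : IntegrableOn
      (fun x : ℝ => RCLike.re ((x ^ (a-1) * (1-x) ^ (b-1) : ℝ) : ℂ)) (Set.Ioc (0:ℝ) 1) := h2.re
  refine (h3.congr_fun (fun x hx => by simp) measurableSet_Ioc).mono_set Set.Ioo_subset_Ioc_self

lemma betaFn_succ {a b : ℝ} (ha : 0 < a) (hb : 0 < b) :
    betaFn (a + 1) b = (a / (a + b)) * betaFn a b := by
  have hab : (0:ℝ) < a + b := by linarith
  have h1 : Real.Gamma (a + 1) = a * Real.Gamma a := Real.Gamma_add_one ha.ne'
  have h2 : Real.Gamma (a + 1 + b) = (a + b) * Real.Gamma (a + b) := by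
    rw [show a + 1 + b = (a + b) + 1 by ring, Real.Gamma_add_one hab.ne']
  rw [betaFn, betaFn, h1, h2]
  field_simp

lemma mom1 {a b : ℝ} (x : ℝ) (hx : x ∈ Set.Ioo (0:ℝ) 1) :
    x * (x ^ (a-1) * (1-x) ^ (b-1)) = x ^ (a+1-1) * (1-x) ^ (b-1) := by
  rw [show a + 1 - 1 = (a-1) + 1 by ring, Real.rpow_add hx.1, Real.rpow_one]
  ring

lemma mom2 {a b : ℝ} (x : ℝ) (hx : x ∈ Set.Ioo (0:ℝ) 1) :
    x^2 * (x ^ (a-1) * (1-x) ^ (b-1)) = x ^ (a+2-1) * (1-x) ^ (b-1) := by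
  rw [show a + 2 - 1 = (a-1) + 1 + 1 by ring, Real.rpow_add hx.1, Real.rpow_add hx.1,
    Real.rpow_one]
  ring

lemma integral_sq {a b : ℝ} (ha : 0 < a) (hb : 0 < b) (c : ℝ) :
    ∫ x in Set.Ioo (0:ℝ) 1, (x - c)^2 * (x ^ (a-1) * (1-x) ^ (b-1))
      = betaFn (a+2) b - 2*c*betaFn (a+1) b + c^2 * betaFn a b := by
  have e : Set.EqOn (fun x => (x - c)^2 * (x ^ (a-1) * (1-x) ^ (b-1)))
      (fun x => (x ^ (a+2-1) * (1-x) ^ (b-1) - 2*c*(x ^ (a+1-1) * (1-x) ^ (b-1)))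
        + c^2*(x ^ (a-1) * (1-x) ^ (b-1))) (Set.Ioo 0 1) := by
    intro x hx
    simp only
    rw [← mom1 x hx, ← mom2 x hx]; ring
  rw [MeasureTheory.setIntegral_congr_fun measurableSet_Ioo e]
  have i2 := integrable_w (by linarith : (0:ℝ) < a + 2) hb
  have i1 := integrable_w (by linarith : (0:ℝ) < a + 1) hb
  have i0 := integrable_w ha hb
  rw [integral_add (f := fun x => x ^ (a+2-1) * (1-x) ^ (b-1) - 2*c*(x ^ (a+1-1) * (1-x) ^ (b-1)))
      (g := fun x => c^2*(x ^ (a-1) * (1-x) ^ (b-1)))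
      (i2.sub (i1.const_mul (2*c))) (i0.const_mul (c^2)),
    integral_sub (f := fun x => x ^ (a+2-1) * (1-x) ^ (b-1))
      (g := fun x => 2*c*(x ^ (a+1-1) * (1-x) ^ (b-1))) i2 (i1.const_mul (2*c)),
    MeasureTheory.integral_const_mul, MeasureTheory.integral_const_mul,
    integral_w (by linarith) hb, integral_w (by linarith) hb, integral_w ha hb]

lemma q_lim (α ν : ℕ → ℝ) (hαpos : ∀ n, 0 < α n) (hνpos : ∀ n, 0 < ν n)
    (hαtop : Filter.Tendsto α Filter.atTop Filter.atTop)
    (κ : ℝ) (hκ : 0 < κ)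
    (hratio : Filter.Tendsto (fun n => ν n / α n) Filter.atTop (nhds κ)) :
    Filter.Tendsto (fun n => (betaFn (α n + 2) (ν n) - 2*(1/(1+κ))*betaFn (α n + 1) (ν n)
      + (1/(1+κ))^2 * betaFn (α n) (ν n)) / betaFn (α n) (ν n)) Filter.atTop (nhds 0) := by
  set c : ℝ := 1/(1+κ) with hc
  have h1κ : (0:ℝ) < 1 + κ := by linarith
  have hinv : Tendsto (fun n => 1 / α n) atTop (nhds 0) := by
    simpa [one_div, Function.comp_def] using tendsto_inv_atTop_zero.comp hαtop
  have hr1 : Tendsto (fun n => α n / (α n + ν n)) atTop (nhds c) := by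
    have : Tendsto (fun n => 1 / (1 + ν n / α n)) atTop (nhds c) := by
      rw [hc]
      exact tendsto_const_nhds.div (tendsto_const_nhds.add hratio) (by positivity)
    refine this.congr fun n => ?_
    have h1 := hαpos n; have h2 := hνpos n
    field_simp
  have hr2 : Tendsto (fun n => (α n + 1) / (α n + ν n + 1)) atTop (nhds c) := by
    have key : Tendsto (fun n => (1 + 1/α n) / (1 + ν n / α n + 1/α n)) atTop
        (nhds ((1+0)/(1+κ+0))) :=
      (tendsto_const_nhds.add hinv).div ((tendsto_const_nhds.add hratio).add hinv)
        (by norm_num; linarith)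
    rw [show (1+0)/(1+κ+0) = c by rw [hc]; norm_num] at key
    refine key.congr fun n => ?_
    have h1 := hαpos n; have h2 := hνpos n
    field_simp
  have keyq : Tendsto (fun n => (α n / (α n + ν n)) * ((α n + 1) / (α n + ν n + 1))
      - 2*c*(α n / (α n + ν n)) + c^2) atTop (nhds (c*c - 2*c*c + c^2)) :=
    ((hr1.mul hr2).sub ((tendsto_const_nhds.mul hr1))).add tendsto_const_nhds
  rw [show c*c - 2*c*c + c^2 = 0 by ring] at keyq
  refine keyq.congr fun n => ?_
  have ha := hαpos n; have hb := hνpos n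
  have hB := betaFn_pos ha hb
  have e2 : betaFn (α n + 2) (ν n)
      = ((α n + 1) / (α n + 1 + ν n)) * ((α n / (α n + ν n)) * betaFn (α n) (ν n)) := by
    rw [show α n + 2 = (α n + 1) + 1 by ring, betaFn_succ (by linarith) hb,
      betaFn_succ ha hb]
  rw [e2, betaFn_succ ha hb]
  have h1 : α n + ν n ≠ 0 := by positivity
  have h2 : α n + 1 + ν n ≠ 0 := by positivity
  have h3 : α n + ν n + 1 ≠ 0 := by positivity
  field_simp
  ring

/-- If `α_n, ν_n` are positive increasing sequences with `α_n → ∞` and `ν_n/α_n → κ > 0`, then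
`F_{τ,α_n,ν_n}(θ) → N_{1/(1+κ),τ}(θ)` for every `θ ∈ [0,π]`. -/
theorem Ffam_tendsto_negBinom (τ : ℝ) (hτ : 0 < τ) (α ν : ℕ → ℝ)
    (hαpos : ∀ n, 0 < α n) (hνpos : ∀ n, 0 < ν n)
    (hαmono : StrictMono α) (hνmono : StrictMono ν)
    (hαtop : Filter.Tendsto α Filter.atTop Filter.atTop)
    (κ : ℝ) (hκ : 0 < κ)
    (hratio : Filter.Tendsto (fun n => ν n / α n) Filter.atTop (nhds κ)) :
    ∀ θ ∈ Set.Icc (0:ℝ) Real.pi,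
      Filter.Tendsto (fun n => Ffam τ (α n) (ν n) θ) Filter.atTop
        (nhds (negBinom (1 / (1 + κ)) τ θ)) := by
  intro θ hθ
  have h1κ : (0:ℝ) < 1 + κ := by linarith
  have hc0 : (0:ℝ) < 1/(1+κ) := by positivity
  have hc1 : 1/(1+κ) < 1 := by rw [div_lt_one h1κ]; linarith
  by_cases hθ0 : θ = 0
  · subst hθ0
    have hL : negBinom (1/(1+κ)) τ 0 = 1 := by
      rw [negBinom, Real.cos_zero, mul_one, div_self (by linarith), Real.one_rpow]
    have hF : ∀ n, Ffam τ (α n) (ν n) 0 = 1 := by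
      intro n
      rw [Ffam]
      have hI : (∫ δ in Set.Ioo (0:ℝ) 1,
          ((1 - δ) / (1 - δ * Real.cos 0)) ^ τ * δ ^ (α n - 1) * (1 - δ) ^ (ν n - 1))
          = betaFn (α n) (ν n) := by
        rw [← integral_w (hαpos n) (hνpos n)]
        refine MeasureTheory.setIntegral_congr_fun measurableSet_Ioo fun x hx => ?_
        simp only [Real.cos_zero, mul_one]
        rw [div_self (by linarith [hx.2] : (1:ℝ) - x ≠ 0),
          Real.one_rpow, one_mul]
      rw [hI, one_div, inv_mul_cancel₀ (betaFn_pos (hαpos n) (hνpos n)).ne']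
    rw [hL]
    simpa [hF] using (tendsto_const_nhds : Tendsto (fun _ : ℕ => (1:ℝ)) atTop (nhds 1))
  -- now θ ∈ (0, π]
  have hθpos : 0 < θ := lt_of_le_of_ne hθ.1 (Ne.symm hθ0)
  have hcos : Real.cos θ < 1 := by
    have := Real.strictAntiOn_cos (Set.mem_Icc.mpr ⟨le_refl 0, Real.pi_pos.le⟩)
      (Set.mem_Icc.mpr ⟨hθ.1, hθ.2⟩) hθpos
    simpa using this
  have hcosm := Real.neg_one_le_cos θ
  set c : ℝ := 1/(1+κ) with hc
  set f : ℝ → ℝ := fun x => ((1 - x) / (1 - x * Real.cos θ)) ^ τ with hf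
  have hden : ∀ x ∈ Set.Icc (0:ℝ) 1, 0 < 1 - x * Real.cos θ := by
    intro x hx
    rcases le_or_gt (Real.cos θ) 0 with h | h
    · nlinarith [hx.1, hx.2]
    · nlinarith [hx.1, hx.2]
  have hbase01 : ∀ x ∈ Set.Icc (0:ℝ) 1,
      0 ≤ (1 - x) / (1 - x * Real.cos θ) ∧ (1 - x) / (1 - x * Real.cos θ) ≤ 1 := by
    intro x hx
    constructor
    · exact div_nonneg (by linarith [hx.2]) (hden x hx).le
    · rw [div_le_one (hden x hx)]
      nlinarith [hx.1, hx.2]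
  have hf01 : ∀ x ∈ Set.Icc (0:ℝ) 1, 0 ≤ f x ∧ f x ≤ 1 := by
    intro x hx
    exact ⟨Real.rpow_nonneg (hbase01 x hx).1 τ,
      Real.rpow_le_one (hbase01 x hx).1 (hbase01 x hx).2 hτ.le⟩
  have hfc : ContinuousOn f (Set.Icc (0:ℝ) 1) := by
    apply ContinuousOn.rpow_const
    · exact ContinuousOn.div (by fun_prop) (by fun_prop) (fun x hx => (hden x hx).ne')
    · intro x hx; exact Or.inr hτ.le
  have huc := (isCompact_Icc.uniformContinuousOn_of_continuous hfc)
  rw [Metric.uniformContinuousOn_iff] at huc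
  have hfm : Measurable f := by fun_prop
  have hcI : c ∈ Set.Icc (0:ℝ) 1 := ⟨hc0.le, hc1.le⟩
  have hLf : negBinom c τ θ = f c := rfl
  rw [hLf]
  rw [Metric.tendsto_atTop]
  intro ε hε
  obtain ⟨η, hη, hucε⟩ := huc (ε/2) (by positivity)
  have hq := q_lim α ν hαpos hνpos hαtop κ hκ hratio
  have hq2 : Tendsto (fun n => η⁻¹^2 * ((betaFn (α n + 2) (ν n) - 2*c*betaFn (α n + 1) (ν n)
      + c^2 * betaFn (α n) (ν n)) / betaFn (α n) (ν n))) atTop (nhds 0) := by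
    rw [← hc] at hq
    have h := hq.const_mul (η⁻¹^2)
    rwa [mul_zero] at h
  rw [Metric.tendsto_atTop] at hq2
  obtain ⟨N, hN⟩ := hq2 (ε/2) (by positivity)
  refine ⟨N, fun n hn => ?_⟩
  have ha := hαpos n; have hb := hνpos n
  have hB := betaFn_pos ha hb
  set w : ℝ → ℝ := fun x => x ^ (α n - 1) * (1 - x) ^ (ν n - 1) with hw
  have hwint : IntegrableOn w (Set.Ioo (0:ℝ) 1) := integrable_w ha hb
  have hwnn : ∀ x ∈ Set.Ioo (0:ℝ) 1, 0 ≤ w x := by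
    intro x hx
    exact mul_nonneg (Real.rpow_nonneg hx.1.le _) (Real.rpow_nonneg (by linarith [hx.2]) _)
  have hsub : Set.Ioo (0:ℝ) 1 ⊆ Set.Icc 0 1 := Set.Ioo_subset_Icc_self
  -- integrabilities
  have hfw_int : IntegrableOn (fun x => f x * w x) (Set.Ioo (0:ℝ) 1) := by
    refine hwint.bdd_mul (c := 1) (hfm.aestronglyMeasurable) ?_
    refine (MeasureTheory.ae_restrict_iff' measurableSet_Ioo).mpr (ae_of_all _ fun x hx => ?_)
    rw [Real.norm_eq_abs, abs_of_nonneg (hf01 x (hsub hx)).1]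
    exact (hf01 x (hsub hx)).2
  have hdiff_int : IntegrableOn (fun x => (f x - f c) * w x) (Set.Ioo (0:ℝ) 1) := by
    refine hwint.bdd_mul (c := 1) ((hfm.sub measurable_const).aestronglyMeasurable) ?_
    refine (MeasureTheory.ae_restrict_iff' measurableSet_Ioo).mpr (ae_of_all _ fun x hx => ?_)
    rw [Real.norm_eq_abs]
    have h1 := hf01 x (hsub hx); have h2 := hf01 c hcI
    rw [abs_le]
    constructor <;> [linarith [h1.1, h2.2]; linarith [h1.2, h2.1]]
  have hsq_int : IntegrableOn (fun x => (x - c)^2 * w x) (Set.Ioo (0:ℝ) 1) := by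
    refine hwint.bdd_mul (c := 1)
      (((continuous_id.sub continuous_const).pow 2).aestronglyMeasurable) ?_
    refine (MeasureTheory.ae_restrict_iff' measurableSet_Ioo).mpr (ae_of_all _ fun x hx => ?_)
    rw [Real.norm_eq_abs, abs_of_nonneg (sq_nonneg _)]
    have := hx.1; have := hx.2
    nlinarith [hc0, hc1]
  -- express Ffam
  have hFf : Ffam τ (α n) (ν n) θ = (1/betaFn (α n) (ν n)) * ∫ x in Set.Ioo (0:ℝ) 1, f x * w x := by
    rw [Ffam]
    congr 1
    refine MeasureTheory.setIntegral_congr_fun measurableSet_Ioo fun x hx => ?_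
    simp only [hf, hw]
    ring
  -- the key difference identity
  have hdiff : (∫ x in Set.Ioo (0:ℝ) 1, (f x - f c) * w x)
      = (∫ x in Set.Ioo (0:ℝ) 1, f x * w x) - f c * betaFn (α n) (ν n) := by
    have : (∫ x in Set.Ioo (0:ℝ) 1, (f x - f c) * w x)
        = (∫ x in Set.Ioo (0:ℝ) 1, (f x * w x - f c * w x)) := by
      refine MeasureTheory.setIntegral_congr_fun measurableSet_Ioo fun x hx => ?_
      ring
    rw [this, integral_sub hfw_int (hwint.const_mul (f c)),
      MeasureTheory.integral_const_mul, integral_w ha hb]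
  -- pointwise bound and integral bound
  have hbound : (∫ x in Set.Ioo (0:ℝ) 1, |(f x - f c) * w x|)
      ≤ ε/2 * betaFn (α n) (ν n) + η⁻¹^2 * (betaFn (α n + 2) (ν n)
        - 2*c*betaFn (α n + 1) (ν n) + c^2 * betaFn (α n) (ν n)) := by
    have hmono : (∫ x in Set.Ioo (0:ℝ) 1, |(f x - f c) * w x|)
        ≤ ∫ x in Set.Ioo (0:ℝ) 1, (ε/2 * w x + η⁻¹^2 * ((x - c)^2 * w x)) := by
      refine MeasureTheory.setIntegral_mono_on hdiff_int.abs
        ((hwint.const_mul (ε/2)).add (hsq_int.const_mul (η⁻¹^2))) measurableSet_Ioo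
        fun x hx => ?_
      rw [abs_mul, abs_of_nonneg (hwnn x hx)]
      have hptw : |f x - f c| ≤ ε/2 + η⁻¹^2 * (x - c)^2 := by
        by_cases hd : |x - c| < η
        · have := hucε x (hsub hx) c hcI (by rwa [Real.dist_eq])
          rw [Real.dist_eq] at this
          nlinarith [sq_nonneg (η⁻¹ * (x - c)), this]
        · push_neg at hd
          have h1 := hf01 x (hsub hx); have h2 := hf01 c hcI
          have habs : |f x - f c| ≤ 1 := by
            rw [abs_le]; constructor <;> [linarith [h1.1, h2.2]; linarith [h1.2, h2.1]]
          have hsq : η^2 ≤ (x - c)^2 := by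
            have := abs_nonneg (x - c)
            nlinarith [sq_abs (x - c)]
          have : (1:ℝ) ≤ η⁻¹^2 * (x - c)^2 := by
            rw [← one_le_div (by positivity : (0:ℝ) < η^2)] at hsq
            calc (1:ℝ) ≤ (x-c)^2 / η^2 := hsq
              _ = η⁻¹^2 * (x-c)^2 := by field_simp
          linarith [habs, hε]
      calc |f x - f c| * w x ≤ (ε/2 + η⁻¹^2 * (x - c)^2) * w x :=
            mul_le_mul_of_nonneg_right hptw (hwnn x hx)
        _ = ε/2 * w x + η⁻¹^2 * ((x - c)^2 * w x) := by ring
    rw [integral_add (hwint.const_mul (ε/2)) (hsq_int.const_mul (η⁻¹^2)),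
      MeasureTheory.integral_const_mul, MeasureTheory.integral_const_mul,
      integral_w ha hb, integral_sq ha hb c] at hmono
    exact hmono
  -- conclude
  have habs_int : |∫ x in Set.Ioo (0:ℝ) 1, (f x - f c) * w x|
      ≤ ∫ x in Set.Ioo (0:ℝ) 1, |(f x - f c) * w x| := by
    have h := MeasureTheory.norm_integral_le_integral_norm
      (μ := volume.restrict (Set.Ioo (0:ℝ) 1)) (fun x => (f x - f c) * w x)
    simp only [Real.norm_eq_abs] at h
    exact h
  have hqn := hN n hn
  rw [Real.dist_eq, sub_zero] at hqn
  have hqle : η⁻¹^2 * ((betaFn (α n + 2) (ν n) - 2*c*betaFn (α n + 1) (ν n)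
      + c^2 * betaFn (α n) (ν n)) / betaFn (α n) (ν n)) < ε/2 := lt_of_abs_lt hqn
  rw [Real.dist_eq, hFf]
  have : (1/betaFn (α n) (ν n)) * (∫ x in Set.Ioo (0:ℝ) 1, f x * w x) - f c
      = (1/betaFn (α n) (ν n)) * ((∫ x in Set.Ioo (0:ℝ) 1, f x * w x)
        - f c * betaFn (α n) (ν n)) := by
    field_simp
  rw [this, ← hdiff, abs_mul, abs_of_pos (by positivity : (0:ℝ) < 1/betaFn (α n) (ν n))]
  calc (1/betaFn (α n) (ν n)) * |∫ x in Set.Ioo (0:ℝ) 1, (f x - f c) * w x|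
      ≤ (1/betaFn (α n) (ν n)) * (ε/2 * betaFn (α n) (ν n) + η⁻¹^2 * (betaFn (α n + 2) (ν n)
        - 2*c*betaFn (α n + 1) (ν n) + c^2 * betaFn (α n) (ν n))) :=
        mul_le_mul_of_nonneg_left (le_trans habs_int hbound) (by positivity)
    _ = ε/2 + η⁻¹^2 * ((betaFn (α n + 2) (ν n) - 2*c*betaFn (α n + 1) (ν n)
        + c^2 * betaFn (α n) (ν n)) / betaFn (α n) (ν n)) := by
        field_simp
    _ < ε/2 + ε/2 := by linarith [hqle]
    _ = ε := by ring
end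

section
/- Let τ, α, ν > 0 and let b_n = (B(α,ν+τ)/B(α,ν)) · (α)_n (τ)_n / ((α+ν+τ)_n · n!) for n = 0, 1, 2, … be the Schoenberg coefficients of the F-family. Then there exists a constant M > 0 (depending on α, τ, ν) such that n^{1+ν} · b_n → M as n → ∞; that is, b_n ∼ M n^{-(1+ν)}. -/
open Real Filter

lemma poch_eq_prod (x : ℝ) (n : ℕ) : poch x n = ∏ i ∈ Finset.range n, (x + i) := by
  induction n with
  | zero => simp [poch]
  | succ n ih =>
    rw [poch, ascPochhammer_succ_eval, ← poch, ih, Finset.prod_range_succ]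

lemma poch_pos_s11 {x : ℝ} (hx : 0 < x) (n : ℕ) : 0 < poch x n := by
  rw [poch_eq_prod]
  exact Finset.prod_pos fun i _ => by positivity

lemma gammaSeq_eq (x : ℝ) (n : ℕ) :
    Real.GammaSeq x n = (n : ℝ) ^ x * n.factorial / (poch x n * (x + n)) := by
  rw [Real.GammaSeq, Finset.prod_range_succ, poch_eq_prod]

lemma gammaSeq_pos {x : ℝ} (hx : 0 < x) {n : ℕ} (hn : 1 ≤ n) : 0 < Real.GammaSeq x n := by
  rw [gammaSeq_eq]
  have hN : (0:ℝ) < n := by exact_mod_cast hn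
  have := poch_pos_s11 hx n
  have h1 : (0:ℝ) < (n:ℝ) ^ x := Real.rpow_pos_of_pos hN x
  have h2 : (0:ℝ) < n.factorial := by exact_mod_cast n.factorial_pos
  positivity

/-- Schoenberg coefficients of the `F`-family. -/
noncomputable def schoenbergCoeff (τ α ν : ℝ) (n : ℕ) : ℝ :=
  (betaFn α (ν + τ) / betaFn α ν) *
    (poch α n * poch τ n / (poch (α + ν + τ) n * n.factorial))

lemma key (τ α ν : ℝ) (hτ : 0 < τ) (hα : 0 < α) (hν : 0 < ν) (n : ℕ) (hn : 1 ≤ n) :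
    (n : ℝ) ^ (1 + ν) * schoenbergCoeff τ α ν n =
      (betaFn α (ν + τ) / betaFn α ν) *
        (Real.GammaSeq (α + ν + τ) n / (Real.GammaSeq α n * Real.GammaSeq τ n)) *
        (((n : ℝ) / (α + n)) * (((α + ν + τ) + n) / (τ + n))) := by
  have hN : (0:ℝ) < n := by exact_mod_cast hn
  have hs : 0 < α + ν + τ := by linarith
  have hPα := poch_pos_s11 hα n
  have hPτ := poch_pos_s11 hτ n
  have hPs := poch_pos_s11 hs n
  have hF : (0:ℝ) < n.factorial := by exact_mod_cast n.factorial_pos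
  have hA : (0:ℝ) < (n:ℝ) ^ α := Real.rpow_pos_of_pos hN α
  have hB : (0:ℝ) < (n:ℝ) ^ τ := Real.rpow_pos_of_pos hN τ
  have hC : (0:ℝ) < (n:ℝ) ^ (α + ν + τ) := Real.rpow_pos_of_pos hN _
  have hpow : (n:ℝ) ^ (1 + ν) * ((n:ℝ) ^ α * (n:ℝ) ^ τ) = (n:ℝ) * (n:ℝ) ^ (α + ν + τ) := by
    rw [← Real.rpow_add hN, ← Real.rpow_add hN,
      show (1 + ν) + (α + τ) = 1 + (α + ν + τ) by ring, Real.rpow_add hN, Real.rpow_one]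
  rw [schoenbergCoeff, gammaSeq_eq, gammaSeq_eq, gammaSeq_eq]
  have haN : (0:ℝ) < α + n := by positivity
  have hτN : (0:ℝ) < τ + n := by positivity
  have hsN : (0:ℝ) < (α + ν + τ) + n := by positivity
  have hBν : 0 < betaFn α (ν + τ) := by
    unfold betaFn
    have := Real.Gamma_pos_of_pos hα
    have := Real.Gamma_pos_of_pos (by linarith : (0:ℝ) < ν + τ)
    have := Real.Gamma_pos_of_pos (by linarith : (0:ℝ) < α + (ν + τ))
    positivity
  have hBd : 0 < betaFn α ν := by
    unfold betaFn
    have := Real.Gamma_pos_of_pos hα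
    have := Real.Gamma_pos_of_pos hν
    have := Real.Gamma_pos_of_pos (by linarith : (0:ℝ) < α + ν)
    positivity
  have hpow' : (n:ℝ) ^ (1 + ν) = (n:ℝ) * (n:ℝ) ^ (α + ν + τ) / ((n:ℝ) ^ α * (n:ℝ) ^ τ) := by
    rw [eq_div_iff (by positivity)]; exact hpow
  rw [hpow']
  field_simp

/-- The Schoenberg coefficients of the `F`-family satisfy `b_n ∼ M n^{-(1+ν)}` as `n → ∞`
for some positive constant `M` depending on `α, τ, ν`. -/
theorem schoenbergCoeff_asymptotics (τ α ν : ℝ) (hτ : 0 < τ) (hα : 0 < α) (hν : 0 < ν) :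
    ∃ M : ℝ, 0 < M ∧
      Filter.Tendsto (fun n : ℕ => (n : ℝ) ^ (1 + ν) * schoenbergCoeff τ α ν n)
        Filter.atTop (nhds M) := by
  have hs : 0 < α + ν + τ := by linarith
  have hΓα := Real.Gamma_pos_of_pos hα
  have hΓτ := Real.Gamma_pos_of_pos hτ
  have hΓs := Real.Gamma_pos_of_pos hs
  have hBν : 0 < betaFn α (ν + τ) := by
    unfold betaFn
    have := Real.Gamma_pos_of_pos (by linarith : (0:ℝ) < ν + τ)
    have := Real.Gamma_pos_of_pos (by linarith : (0:ℝ) < α + (ν + τ))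
    positivity
  have hBd : 0 < betaFn α ν := by
    unfold betaFn
    have := Real.Gamma_pos_of_pos hν
    have := Real.Gamma_pos_of_pos (by linarith : (0:ℝ) < α + ν)
    positivity
  set C : ℝ := betaFn α (ν + τ) / betaFn α ν with hC
  refine ⟨C * (Real.Gamma (α + ν + τ) / (Real.Gamma α * Real.Gamma τ)) * (1 * 1),
    by positivity, ?_⟩
  -- the three convergent factors
  have h1 : Tendsto (fun n : ℕ =>
      Real.GammaSeq (α + ν + τ) n / (Real.GammaSeq α n * Real.GammaSeq τ n)) atTop
      (nhds (Real.Gamma (α + ν + τ) / (Real.Gamma α * Real.Gamma τ))) :=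
    (Real.GammaSeq_tendsto_Gamma _).div
      ((Real.GammaSeq_tendsto_Gamma _).mul (Real.GammaSeq_tendsto_Gamma _))
      (by positivity)
  have h2 : Tendsto (fun n : ℕ => (n : ℝ) / (α + n)) atTop (nhds 1) := by
    have : Tendsto (fun n : ℕ => (1 + α / n)⁻¹) atTop (nhds 1) := by
      have := (tendsto_const_nhds.add (tendsto_const_div_atTop_nhds_zero_nat α)).inv₀
        (by norm_num : (1:ℝ) + 0 ≠ 0)
      simpa using this
    refine this.congr' ?_
    filter_upwards [eventually_ge_atTop 1] with n hn
    have hN : (0:ℝ) < n := by exact_mod_cast hn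
    have haN : (0:ℝ) < α + n := by positivity
    field_simp
    ring
  have h3 : Tendsto (fun n : ℕ => ((α + ν + τ) + (n:ℝ)) / (τ + n)) atTop (nhds 1) := by
    have : Tendsto (fun n : ℕ => ((α + ν + τ) / n + 1) / (τ / n + 1)) atTop (nhds 1) := by
      have := ((tendsto_const_div_atTop_nhds_zero_nat (α + ν + τ)).add
          (tendsto_const_nhds (x := (1:ℝ)))).div
        ((tendsto_const_div_atTop_nhds_zero_nat τ).add (tendsto_const_nhds (x := (1:ℝ))))
        (by norm_num : (0:ℝ) + 1 ≠ 0)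
      rw [zero_add, div_one] at this; exact this
    refine this.congr' ?_
    filter_upwards [eventually_ge_atTop 1] with n hn
    have hN : (0:ℝ) < n := by exact_mod_cast hn
    have hτN : (0:ℝ) < τ + n := by positivity
    field_simp
  refine (((tendsto_const_nhds.mul h1).mul (h2.mul h3)).congr' ?_)
  filter_upwards [eventually_ge_atTop 1] with n hn
  exact (key τ α ν hτ hα hν n hn).symm
end
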